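/- For finite partial orders P1 and P2 (nonempty), the product order P1 × P2 is a Boolean lattice if and only if both P1 and P2 are Boolean lattices. -/

import Mathlib

/-- A finite partial order is a Boolean lattice if it is order-isomorphic to the
powerset lattice (`Finset (Fin n)`, ordered by inclusion) of some finite set. -/
def IsBooleanLattice (P : Type*) [PartialOrder P] : Prop :=
  ∃ n : ℕ, Nonempty (P ≃o Finset (Fin n))

open Finset

/-- Transport a `Finset` lattice along an equivalence of the index types. -/
noncomputable def finsetCongrIso {α β : Type*} (e : α ≃ β) : Finset α ≃o Finset β where
  toEquiv := e.finsetCongr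
  map_rel_iff' := by
    intro s t
    simp only [Equiv.finsetCongr_apply]
    exact Finset.map_subset_map

/-- Product of two order isomorphisms. -/
noncomputable def prodOrderIso {α β γ δ : Type*} [Preorder α] [Preorder β] [Preorder γ]
    [Preorder δ] (e1 : α ≃o β) (e2 : γ ≃o δ) : α × γ ≃o β × δ where
  toEquiv := Equiv.prodCongr e1.toEquiv e2.toEquiv
  map_rel_iff' := by
    rintro ⟨a, c⟩ ⟨a', c'⟩
    simp [Prod.le_def, e1.le_iff_le, e2.le_iff_le]

/-- `Finset α × Finset β` is order-isomorphic to `Finset (α ⊕ β)`. -/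
noncomputable def prodFinsetIso (α β : Type*) : Finset α × Finset β ≃o Finset (α ⊕ β) where
  toFun p := p.1.disjSum p.2
  invFun s := (s.toLeft, s.toRight)
  left_inv p := by simp
  right_inv s := by simp [Finset.toLeft_disjSum_toRight]
  map_rel_iff' := by
    rintro ⟨s, t⟩ ⟨u, v⟩
    constructor
    · intro h
      exact ⟨by simpa using Finset.toLeft_subset_toLeft h,
             by simpa using Finset.toRight_subset_toRight h⟩
    · rintro ⟨h1, h2⟩
      exact Finset.disjSum_mono h1 h2

/-- An interval `[A, B]` in a powerset lattice is order-isomorphic to the powerset of `B \ A`. -/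
noncomputable def iccIso {α : Type*} [DecidableEq α] (A B : Finset α) (hAB : A ⊆ B) :
    (Set.Icc A B : Set (Finset α)) ≃o Finset {x // x ∈ B \ A} where
  toFun s := (s : Finset α).subtype (· ∈ B \ A)
  invFun t := ⟨A ∪ t.map (Function.Embedding.subtype _), by
    constructor
    · exact Finset.subset_union_left
    · intro x hx
      rcases Finset.mem_union.1 hx with h | h
      · exact hAB h
      · obtain ⟨⟨y, hy⟩, _, rfl⟩ := Finset.mem_map.1 h
        exact (Finset.mem_sdiff.1 hy).1⟩
  left_inv := by
    rintro ⟨s, hs1, hs2⟩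
    apply Subtype.ext
    ext x
    simp only [Finset.mem_union, Finset.mem_map, Finset.mem_subtype,
      Function.Embedding.coe_subtype, Subtype.exists, Finset.mem_sdiff]
    constructor
    · rintro (h | ⟨y, ⟨hyB, hyA⟩, hys, rfl⟩)
      · exact hs1 h
      · exact hys
    · intro hx
      by_cases hxA : x ∈ A
      · exact Or.inl hxA
      · exact Or.inr ⟨x, ⟨hs2 hx, hxA⟩, hx, rfl⟩
  right_inv := by
    intro t
    ext ⟨x, hx⟩
    have hxA : x ∉ A := (Finset.mem_sdiff.1 hx).2
    simp only [Finset.mem_subtype, Finset.mem_union, Finset.mem_map,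
      Function.Embedding.coe_subtype, Subtype.exists]
    constructor
    · rintro (h | ⟨y, hy, hyt, h⟩)
      · exact absurd h hxA
      · subst h; exact hyt
    · intro h
      exact Or.inr ⟨x, hx, h, rfl⟩
  map_rel_iff' := by
    rintro ⟨s, hs⟩ ⟨t, ht⟩
    simp only [Equiv.coe_fn_mk]
    constructor
    · intro h
      intro x hx
      by_cases hxA : x ∈ A
      · exact ht.1 hxA
      · have hxD : x ∈ B \ A := Finset.mem_sdiff.2 ⟨hs.2 hx, hxA⟩
        have h1 : (⟨x, hxD⟩ : {x // x ∈ B \ A}) ∈ s.subtype (· ∈ B \ A) :=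
          Finset.mem_subtype.2 hx
        exact Finset.mem_subtype.1 (h h1)
    · intro h
      exact Finset.subtype_mono h

/-- Any order isomorphic to an interval of a powerset lattice is a Boolean lattice. -/
theorem isBooleanLattice_of_iccIso {Q : Type*} [PartialOrder Q] {n : ℕ}
    (A B : Finset (Fin n)) (hAB : A ⊆ B)
    (f : Q ≃o (Set.Icc A B : Set (Finset (Fin n)))) : IsBooleanLattice Q := by
  refine ⟨(B \ A).card, ⟨(f.trans (iccIso A B hAB)).trans (finsetCongrIso ?_)⟩⟩
  exact (Fintype.equivFin _).trans (finCongr (Fintype.card_coe _))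

theorem stmt_19 {P1 P2 : Type*} [PartialOrder P1] [PartialOrder P2]
    [Fintype P1] [Fintype P2] [Nonempty P1] [Nonempty P2] :
    IsBooleanLattice (P1 × P2) ↔ IsBooleanLattice P1 ∧ IsBooleanLattice P2 := by
  classical
  constructor
  · rintro ⟨n, ⟨e⟩⟩
    set b : P1 × P2 := e.symm ⊥ with hbdef
    set t : P1 × P2 := e.symm ⊤ with htdef
    have hb : ∀ z : P1 × P2, b ≤ z := fun z => by
      rw [hbdef, e.symm_apply_le]; exact bot_le
    have ht : ∀ z : P1 × P2, z ≤ t := fun z => by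
      rw [htdef, e.le_symm_apply]; exact le_top
    have hb1 : ∀ x : P1, b.1 ≤ x := fun x => (hb (x, b.2)).1
    have hb2 : ∀ y : P2, b.2 ≤ y := fun y => (hb (b.1, y)).2
    have ht1 : ∀ x : P1, x ≤ t.1 := fun x => (ht (x, t.2)).1
    have ht2 : ∀ y : P2, y ≤ t.2 := fun y => (ht (t.1, y)).2
    constructor
    · -- P1
      set A : Finset (Fin n) := e (b.1, b.2) with hA
      set B : Finset (Fin n) := e (t.1, b.2) with hB
      have hAB : A ⊆ B := e.le_iff_le.2 ⟨ht1 _, le_rfl⟩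
      refine isBooleanLattice_of_iccIso A B hAB ?_
      refine
        { toFun := fun x => ⟨e (x, b.2),
            e.le_iff_le.2 ⟨hb1 _, le_rfl⟩, e.le_iff_le.2 ⟨ht1 _, le_rfl⟩⟩
          invFun := fun s => (e.symm s.1).1
          left_inv := fun x => by simp
          right_inv := ?_
          map_rel_iff' := ?_ }
      · rintro ⟨s, hs1, hs2⟩
        apply Subtype.ext
        have h2 : (e.symm s).2 = b.2 := by
          have hle : e.symm s ≤ (t.1, b.2) := by
            rw [e.symm_apply_le]; exact hs2
          exact le_antisymm hle.2 (hb2 _)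
        have : ((e.symm s).1, b.2) = e.symm s := by
          rw [← h2]
        simp only [this]
        exact e.apply_symm_apply s
      · intro x y
        simp only [Equiv.coe_fn_mk, Subtype.mk_le_mk]
        change e (x, b.2) ≤ e (y, b.2) ↔ x ≤ y
        rw [e.le_iff_le, Prod.mk_le_mk]
        simp
    · -- P2
      set A : Finset (Fin n) := e (b.1, b.2) with hA
      set B : Finset (Fin n) := e (b.1, t.2) with hB
      have hAB : A ⊆ B := e.le_iff_le.2 ⟨le_rfl, ht2 _⟩
      refine isBooleanLattice_of_iccIso A B hAB ?_
      refine
        { toFun := fun y => ⟨e (b.1, y),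
            e.le_iff_le.2 ⟨le_rfl, hb2 _⟩, e.le_iff_le.2 ⟨le_rfl, ht2 _⟩⟩
          invFun := fun s => (e.symm s.1).2
          left_inv := fun y => by simp
          right_inv := ?_
          map_rel_iff' := ?_ }
      · rintro ⟨s, hs1, hs2⟩
        apply Subtype.ext
        have h1 : (e.symm s).1 = b.1 := by
          have hle : e.symm s ≤ (b.1, t.2) := by
            rw [e.symm_apply_le]; exact hs2
          exact le_antisymm hle.1 (hb1 _)
        have : (b.1, (e.symm s).2) = e.symm s := by
          rw [← h1]
        simp only [this]
        exact e.apply_symm_apply s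
      · intro x y
        simp only [Equiv.coe_fn_mk, Subtype.mk_le_mk]
        change e (b.1, x) ≤ e (b.1, y) ↔ x ≤ y
        rw [e.le_iff_le, Prod.mk_le_mk]
        simp
  · rintro ⟨⟨n, ⟨e1⟩⟩, ⟨m, ⟨e2⟩⟩⟩
    refine ⟨n + m, ⟨((prodOrderIso e1 e2).trans (prodFinsetIso _ _)).trans
      (finsetCongrIso finSumFinEquiv)⟩⟩
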